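/- The map S × Fin 2 → S × Fin 2 given by (z,0) ↦ (z,0) and (z,1) ↦ (−z,1) (where −∞ = ∞) descends to a well-defined homeomorphism f : X₁ → X₂ which satisfies f ∘ σ₁ = σ₂ ∘ f. -/
import Mathlib


open OnePoint

/-- Complex conjugation extended to the Riemann sphere `OnePoint ℂ`, fixing `∞`. -/
noncomputable def conjSphere : OnePoint ℂ → OnePoint ℂ := OnePoint.map (starRingEnd ℂ)

/-- The map `z ↦ -z` extended to the Riemann sphere `OnePoint ℂ`, sending `∞` to `∞`. -/
def negSphere : OnePoint ℂ → OnePoint ℂ := OnePoint.map (fun z : ℂ => -z)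

/-- Identifications `(0,0)∼(0,1)`, `(i,0)∼(i,1)`, `(−i,0)∼(−i,1)` on `S × Fin 2`. -/
def relEx1₁ : OnePoint ℂ × Fin 2 → OnePoint ℂ × Fin 2 → Prop := fun a b =>
  (a = (((0 : ℂ) : OnePoint ℂ), 0) ∧ b = (((0 : ℂ) : OnePoint ℂ), 1)) ∨
  (a = ((Complex.I : OnePoint ℂ), 0) ∧ b = ((Complex.I : OnePoint ℂ), 1)) ∨
  (a = (((-Complex.I : ℂ) : OnePoint ℂ), 0) ∧ b = (((-Complex.I : ℂ) : OnePoint ℂ), 1))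

/-- Identifications `(0,0)∼(0,1)`, `(i,0)∼(−i,1)`, `(−i,0)∼(i,1)` on `S × Fin 2`. -/
def relEx1₂ : OnePoint ℂ × Fin 2 → OnePoint ℂ × Fin 2 → Prop := fun a b =>
  (a = (((0 : ℂ) : OnePoint ℂ), 0) ∧ b = (((0 : ℂ) : OnePoint ℂ), 1)) ∨
  (a = ((Complex.I : OnePoint ℂ), 0) ∧ b = (((-Complex.I : ℂ) : OnePoint ℂ), 1)) ∨
  (a = (((-Complex.I : ℂ) : OnePoint ℂ), 0) ∧ b = ((Complex.I : OnePoint ℂ), 1))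

/-- The map `(z,0) ↦ (z,0)`, `(z,1) ↦ (−z,1)` on `S × Fin 2` (with `−∞ = ∞`). -/
def flipSecondSphere : OnePoint ℂ × Fin 2 → OnePoint ℂ × Fin 2 :=
  fun a => (if a.2 = 1 then negSphere a.1 else a.1, a.2)

-- aux lemmas
lemma continuous_conjSphere : Continuous conjSphere := by
  have : conjSphere = (Homeomorph.onePointCongr Complex.conjCLE.toHomeomorph) := by
    funext x; rfl
  rw [this]; exact Homeomorph.continuous _

lemma continuous_negSphere : Continuous negSphere := by
  have : negSphere = (Homeomorph.onePointCongr (Homeomorph.neg ℂ)) := by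
    funext x; rfl
  rw [this]; exact Homeomorph.continuous _

lemma negSphere_negSphere (x : OnePoint ℂ) : negSphere (negSphere x) = x := by
  cases x with
  | infty => rfl
  | coe z => show ((- - z : ℂ) : OnePoint ℂ) = (z : OnePoint ℂ); rw [neg_neg]

lemma conjSphere_coe (z : ℂ) : conjSphere (z : OnePoint ℂ) = ((starRingEnd ℂ) z : OnePoint ℂ) := rfl

lemma continuous_flipSecondSphere : Continuous flipSecondSphere := by
  unfold flipSecondSphere
  refine Continuous.prodMk ?_ continuous_snd
  have hclopen : IsClopen {a : OnePoint ℂ × Fin 2 | a.2 = 1} := by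
    have : {a : OnePoint ℂ × Fin 2 | a.2 = 1} = Prod.snd ⁻¹' {1} := rfl
    rw [this]
    exact (isClopen_discrete {1}).preimage continuous_snd
  exact Continuous.if (by simp [hclopen.frontier_eq])
    (continuous_negSphere.comp continuous_fst) continuous_fst

/-- conjugation descends to continuous involutions `σ₁`, `σ₂` on the two
complex doubles `X₁ = Quot relEx1₁`, `X₂ = Quot relEx1₂`, and the map
`(z,0) ↦ (z,0)`, `(z,1) ↦ (−z,1)` descends to a homeomorphism `f : X₁ ≃ₜ X₂` with
`f ∘ σ₁ = σ₂ ∘ f`. -/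
theorem double_cover_statement_6 :
    ∃ (σ₁ : Quot relEx1₁ → Quot relEx1₁) (σ₂ : Quot relEx1₂ → Quot relEx1₂),
      Continuous σ₁ ∧ Continuous σ₂ ∧
      (∀ a : OnePoint ℂ × Fin 2,
        σ₁ (Quot.mk relEx1₁ a) = Quot.mk relEx1₁ (conjSphere a.1, a.2)) ∧
      (∀ a : OnePoint ℂ × Fin 2,
        σ₂ (Quot.mk relEx1₂ a) = Quot.mk relEx1₂ (conjSphere a.1, a.2)) ∧
      ∃ f : Quot relEx1₁ ≃ₜ Quot relEx1₂,
        (∀ a : OnePoint ℂ × Fin 2,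
          f (Quot.mk relEx1₁ a) = Quot.mk relEx1₂ (flipSecondSphere a)) ∧
        ∀ x : Quot relEx1₁, f (σ₁ x) = σ₂ (f x) := by
  have hconj0 : (starRingEnd ℂ) 0 = 0 := by simp
  have hconjI : (starRingEnd ℂ) Complex.I = -Complex.I := Complex.conj_I
  have hconjnI : (starRingEnd ℂ) (-Complex.I) = Complex.I := by simp
  -- σ₁
  have h1 : ∀ a b, relEx1₁ a b →
      Quot.mk relEx1₁ (conjSphere a.1, a.2) = Quot.mk relEx1₁ (conjSphere b.1, b.2) := by
    rintro a b (⟨ha, hb⟩ | ⟨ha, hb⟩ | ⟨ha, hb⟩) <;> subst ha <;> subst hb <;>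
      apply Quot.sound <;> simp [relEx1₁, conjSphere_coe, hconj0, hconjI, hconjnI]
  have h2 : ∀ a b, relEx1₂ a b →
      Quot.mk relEx1₂ (conjSphere a.1, a.2) = Quot.mk relEx1₂ (conjSphere b.1, b.2) := by
    rintro a b (⟨ha, hb⟩ | ⟨ha, hb⟩ | ⟨ha, hb⟩) <;> subst ha <;> subst hb <;>
      apply Quot.sound <;> simp [relEx1₂, conjSphere_coe, hconj0, hconjI, hconjnI]
  refine ⟨Quot.lift (fun a => Quot.mk relEx1₁ (conjSphere a.1, a.2)) h1,
    Quot.lift (fun a => Quot.mk relEx1₂ (conjSphere a.1, a.2)) h2, ?_, ?_, fun a => rfl,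
    fun a => rfl, ?_⟩
  · exact continuous_quot_lift _ (continuous_quot_mk.comp
      ((continuous_conjSphere.comp continuous_fst).prodMk continuous_snd))
  · exact continuous_quot_lift _ (continuous_quot_mk.comp
      ((continuous_conjSphere.comp continuous_fst).prodMk continuous_snd))
  -- f
  have hneg0 : negSphere ((0:ℂ) : OnePoint ℂ) = ((0:ℂ) : OnePoint ℂ) := by
    show (((-0 : ℂ)) : OnePoint ℂ) = _; rw [neg_zero]
  have hflip : ∀ a b, relEx1₁ a b →
      Quot.mk relEx1₂ (flipSecondSphere a) = Quot.mk relEx1₂ (flipSecondSphere b) := by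
    rintro a b (⟨ha, hb⟩ | ⟨ha, hb⟩ | ⟨ha, hb⟩) <;> subst ha <;> subst hb <;>
      apply Quot.sound <;> simp only [relEx1₂, flipSecondSphere, hneg0]
    · left; exact ⟨rfl, rfl⟩
    · right; left; exact ⟨rfl, rfl⟩
    · right; right; constructor
      · rfl
      · show ((negSphere ((-Complex.I : ℂ) : OnePoint ℂ)), (1:Fin 2)) = _
        show (((- -Complex.I : ℂ) : OnePoint ℂ), (1:Fin 2)) = _
        rw [neg_neg]
  have hflip' : ∀ a b, relEx1₂ a b →
      Quot.mk relEx1₁ (flipSecondSphere a) = Quot.mk relEx1₁ (flipSecondSphere b) := by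
    rintro a b (⟨ha, hb⟩ | ⟨ha, hb⟩ | ⟨ha, hb⟩) <;> subst ha <;> subst hb <;>
      apply Quot.sound <;> simp only [relEx1₁, flipSecondSphere, hneg0]
    · left; exact ⟨rfl, rfl⟩
    · right; left; constructor
      · rfl
      · show ((negSphere ((-Complex.I : ℂ) : OnePoint ℂ)), (1:Fin 2)) = _
        show (((- -Complex.I : ℂ) : OnePoint ℂ), (1:Fin 2)) = _
        rw [neg_neg]
    · right; right; exact ⟨rfl, rfl⟩
  have hflipflip : ∀ a, flipSecondSphere (flipSecondSphere a) = a := by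
    rintro ⟨z, k⟩
    simp only [flipSecondSphere]
    by_cases h : k = 1 <;> simp [h, negSphere_negSphere]
  refine ⟨⟨⟨Quot.lift (fun a => Quot.mk relEx1₂ (flipSecondSphere a)) hflip,
      Quot.lift (fun a => Quot.mk relEx1₁ (flipSecondSphere a)) hflip', ?_, ?_⟩, ?_, ?_⟩,
      fun a => rfl, ?_⟩
  · intro x; induction x using Quot.ind with
    | _ a => show Quot.mk relEx1₁ (flipSecondSphere (flipSecondSphere a)) = _
             rw [hflipflip]
  · intro x; induction x using Quot.ind with
    | _ a => show Quot.mk relEx1₂ (flipSecondSphere (flipSecondSphere a)) = _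
             rw [hflipflip]
  · exact continuous_quot_lift _ (continuous_quot_mk.comp continuous_flipSecondSphere)
  · exact continuous_quot_lift _ (continuous_quot_mk.comp continuous_flipSecondSphere)
  · have key : ∀ a : OnePoint ℂ × Fin 2,
        flipSecondSphere (conjSphere a.1, a.2) =
          (conjSphere (flipSecondSphere a).1, (flipSecondSphere a).2) := by
      have comm : ∀ z : OnePoint ℂ, negSphere (conjSphere z) = conjSphere (negSphere z) := by
        intro z
        cases z with
        | infty => rfl
        | coe w =>
          show ((-(starRingEnd ℂ) w : ℂ) : OnePoint ℂ) = (((starRingEnd ℂ) (-w) : ℂ) : OnePoint ℂ)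
          rw [map_neg]
      rintro ⟨z, k⟩
      simp only [flipSecondSphere]
      by_cases h : k = 1 <;> simp [h, comm]
    intro x; induction x using Quot.ind with
    | _ a =>
      simp only [Homeomorph.homeomorph_mk_coe, Equiv.coe_fn_mk]
      exact congrArg (Quot.mk relEx1₂) (key a)
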